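/- Let b > 1 and let s, s' be reals with 0 < s ≤ s'. Define F(s,s') = 2·b^{⌊log_b s⌋+1}/(b−1) + s' if ⌊log_b s⌋ = ⌊log_b s'⌋, and F(s,s') = b^{⌊log_b s⌋+1}·(2/(b−1) + 1) + s otherwise. Then s' ↦ F(s,s') is monotone non-decreasing on [s,∞) and s ↦ F(s,s') is monotone non-decreasing on (0, s']. -/
import Mathlib


open Real

/-- The function
`F(s,s') = 2·b^{⌊log_b s⌋+1}/(b−1) + s'` if `⌊log_b s⌋ = ⌊log_b s'⌋`, and
`F(s,s') = b^{⌊log_b s⌋+1}·(2/(b−1) + 1) + s` otherwise. -/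
noncomputable def F17 (b s s' : ℝ) : ℝ :=
  if ⌊Real.logb b s⌋ = ⌊Real.logb b s'⌋ then
    2 * b ^ (⌊Real.logb b s⌋ + 1) / (b - 1) + s'
  else
    b ^ (⌊Real.logb b s⌋ + 1) * (2 / (b - 1) + 1) + s

lemma lt_zpow_floor_logb_succ {b x : ℝ} (hb : 1 < b) (hx : 0 < x) :
    x < b ^ (⌊Real.logb b x⌋ + 1) := by
  have hb0 : 0 < b := lt_trans one_pos hb
  calc x = b ^ Real.logb b x := (Real.rpow_logb hb0 hb.ne' hx).symm
    _ < b ^ (((⌊Real.logb b x⌋ + 1 : ℤ)) : ℝ) := by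
        apply (Real.rpow_lt_rpow_left_iff hb).mpr
        push_cast
        linarith [Int.lt_floor_add_one (Real.logb b x)]
    _ = b ^ (⌊Real.logb b x⌋ + 1) := by rw [Real.rpow_intCast]

lemma floor_logb_mono {b x y : ℝ} (hb : 1 < b) (hx : 0 < x) (hxy : x ≤ y) :
    ⌊Real.logb b x⌋ ≤ ⌊Real.logb b y⌋ :=
  Int.floor_le_floor (Real.logb_le_logb_of_le hb hx hxy)

/-- For `b > 1`: the map `s' ↦ F(s,s')` is monotone non-decreasing on `[s,∞)` for each
`s > 0`, and the map `s ↦ F(s,s')` is monotone non-decreasing on `(0,s']` for each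
`s' > 0`. -/
theorem F_monotone (b : ℝ) (hb : 1 < b) :
    (∀ s : ℝ, 0 < s → MonotoneOn (fun s' => F17 b s s') (Set.Ici s)) ∧
    (∀ s' : ℝ, 0 < s' → MonotoneOn (fun s => F17 b s s') (Set.Ioc 0 s')) := by
  have hb0 : (0:ℝ) < b := lt_trans one_pos hb
  have hd : (0:ℝ) < b - 1 := by linarith
  constructor
  · intro s hs x hx y hy hxy
    simp only [Set.mem_Ici] at hx hy
    have hx0 : 0 < x := lt_of_lt_of_le hs hx
    simp only [F17]
    set k := ⌊Real.logb b s⌋ with hk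
    have hkx : k ≤ ⌊Real.logb b x⌋ := floor_logb_mono hb hs hx
    have hky : k ≤ ⌊Real.logb b y⌋ := floor_logb_mono hb hs hy
    have hxyf : ⌊Real.logb b x⌋ ≤ ⌊Real.logb b y⌋ := floor_logb_mono hb hx0 hxy
    by_cases h1 : k = ⌊Real.logb b x⌋
    · by_cases h2 : k = ⌊Real.logb b y⌋
      · rw [if_pos h1, if_pos h2]; linarith
      · rw [if_pos h1, if_neg h2]
        -- need 2*b^(k+1)/(b-1) + x ≤ b^(k+1)*(2/(b-1)+1) + s
        have hxlt : x < b ^ (⌊Real.logb b x⌋ + 1) := lt_zpow_floor_logb_succ hb hx0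
        rw [← h1] at hxlt
        have he : b ^ (k + 1) * (2 / (b - 1) + 1) = 2 * b ^ (k+1) / (b-1) + b ^ (k+1) := by
          ring
        rw [he]
        linarith
    · have h2 : k ≠ ⌊Real.logb b y⌋ := by
        intro h; exact h1 (le_antisymm hkx (h ▸ hxyf))
      rw [if_neg h1, if_neg h2]
  · intro s' hs' x hx y hy hxy
    simp only [Set.mem_Ioc] at hx hy
    obtain ⟨hx0, hxs⟩ := hx
    obtain ⟨hy0, hys⟩ := hy
    simp only [F17]
    set k' := ⌊Real.logb b s'⌋ with hk'
    have hkx : ⌊Real.logb b x⌋ ≤ k' := floor_logb_mono hb hx0 hxs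
    have hky : ⌊Real.logb b y⌋ ≤ k' := floor_logb_mono hb hy0 hys
    have hxyf : ⌊Real.logb b x⌋ ≤ ⌊Real.logb b y⌋ := floor_logb_mono hb hx0 hxy
    by_cases h1 : ⌊Real.logb b x⌋ = k'
    · have h2 : ⌊Real.logb b y⌋ = k' := le_antisymm hky (h1 ▸ hxyf)
      rw [if_pos h1, if_pos h2, h1, h2]
    · by_cases h2 : ⌊Real.logb b y⌋ = k'
      · rw [if_neg h1, if_pos h2, h2]
        -- need b^(kx+1)*(2/(b-1)+1) + x ≤ 2*b^(k'+1)/(b-1) + s'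
        have hlt : ⌊Real.logb b x⌋ < k' := lt_of_le_of_ne hkx h1
        have hPQ : b ^ (⌊Real.logb b x⌋ + 1) ≤ b ^ k' :=
          zpow_le_zpow_right₀ hb.le (by omega)
        have hP : (0:ℝ) < b ^ (⌊Real.logb b x⌋ + 1) := zpow_pos hb0 _
        have hQ : (0:ℝ) < b ^ k' := zpow_pos hb0 _
        have heq : (b:ℝ) ^ (k' + 1) = b ^ k' * b := by
          rw [zpow_add_one₀ hb0.ne']
        rw [heq]
        set P := b ^ (⌊Real.logb b x⌋ + 1)
        set Q := (b:ℝ) ^ k'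
        have key : P * (2 / (b-1) + 1) ≤ 2 * (Q * b) / (b-1) := by
          have e0 : 2 / (b-1) + 1 = (b+1) / (b-1) := by
            field_simp; ring
          have e1 : P * (2 / (b-1) + 1) = P * (b+1) / (b-1) := by
            rw [e0, mul_div_assoc]
          have e2 : 2 * (Q * b) / (b-1) = Q * (2*b) / (b-1) := by ring
          rw [e1, e2, div_le_div_iff_of_pos_right hd]
          nlinarith [mul_le_mul_of_nonneg_right hPQ (by linarith : (0:ℝ) ≤ b + 1),
            mul_nonneg hQ.le (by linarith : (0:ℝ) ≤ b - 1)]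
        linarith
      · rw [if_neg h1, if_neg h2]
        have hPQ : (b:ℝ) ^ (⌊Real.logb b x⌋ + 1) ≤ b ^ (⌊Real.logb b y⌋ + 1) :=
          zpow_le_zpow_right₀ hb.le (by omega)
        have hC : (0:ℝ) ≤ 2 / (b-1) + 1 := by positivity
        nlinarith
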